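/- Let α ∈ (0,1) and Q > (1−α)/α, and define a = (1 − √(α(1+Q)))²/(1−α) = (√(α(1+Q)) − 1)²/(1−α) and b = (1 + √(α(1+Q)))²/(1−α). Then 0 < a < b and a, b solve the Regime IB end-point equations: (√(b+Q) − √(a+Q)) / (√b − √a) = √α, and ( √((a+Q)(b+Q)) − √(ab) − Q ) / 2 = 1. -/

import Mathlib

/-- for `0 < α < 1` and `Q > (1−α)/α`, the explicit end-points
`a = (√(α(1+Q)) − 1)²/(1−α)`, `b = (1 + √(α(1+Q)))²/(1−α)` satisfy `0 < a < b`
and the Regime IB end-point equations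
`(√(b+Q) − √(a+Q))/(√b − √a) = √α` and `(√((a+Q)(b+Q)) − √(ab) − Q)/2 = 1`. -/
theorem regime_IB_endpoints (α Q : ℝ) (hα0 : 0 < α) (hα1 : α < 1)
    (hQ : Q > (1 - α) / α) :
    0 < (1 - Real.sqrt (α * (1 + Q))) ^ 2 / (1 - α) ∧
    (1 - Real.sqrt (α * (1 + Q))) ^ 2 / (1 - α)
      = (Real.sqrt (α * (1 + Q)) - 1) ^ 2 / (1 - α) ∧
    (1 - Real.sqrt (α * (1 + Q))) ^ 2 / (1 - α)
      < (1 + Real.sqrt (α * (1 + Q))) ^ 2 / (1 - α) ∧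
    (Real.sqrt ((1 + Real.sqrt (α * (1 + Q))) ^ 2 / (1 - α) + Q)
        - Real.sqrt ((1 - Real.sqrt (α * (1 + Q))) ^ 2 / (1 - α) + Q)) /
      (Real.sqrt ((1 + Real.sqrt (α * (1 + Q))) ^ 2 / (1 - α))
        - Real.sqrt ((1 - Real.sqrt (α * (1 + Q))) ^ 2 / (1 - α)))
      = Real.sqrt α ∧
    (Real.sqrt (((1 - Real.sqrt (α * (1 + Q))) ^ 2 / (1 - α) + Q) *
          ((1 + Real.sqrt (α * (1 + Q))) ^ 2 / (1 - α) + Q))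
        - Real.sqrt ((1 - Real.sqrt (α * (1 + Q))) ^ 2 / (1 - α) *
          ((1 + Real.sqrt (α * (1 + Q))) ^ 2 / (1 - α)))
        - Q) / 2 = 1 := by
  have h1α : (0:ℝ) < 1 - α := by linarith
  have hαQ : 1 < α * (1 + Q) := by
    have h := (div_lt_iff₀ hα0).mp hQ
    nlinarith
  set s := Real.sqrt (α * (1 + Q)) with hs_def
  have hs1 : 1 < s := by
    have : Real.sqrt 1 < s := Real.sqrt_lt_sqrt (by norm_num) hαQ
    simpa using this
  have hsq : s ^ 2 = α * (1 + Q) := Real.sq_sqrt (by nlinarith)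
  have hsα : α < s := lt_trans hα1 hs1
  set t := Real.sqrt (1 - α) with ht_def
  set u := Real.sqrt α with hu_def
  have ht0 : 0 < t := Real.sqrt_pos.mpr h1α
  have hu0 : 0 < u := Real.sqrt_pos.mpr hα0
  have ht2 : t ^ 2 = 1 - α := Real.sq_sqrt h1α.le
  have hu2 : u ^ 2 = α := Real.sq_sqrt hα0.le
  -- generic helper
  have key : ∀ x c : ℝ, 0 ≤ x → Real.sqrt (x ^ 2 / c) = x / Real.sqrt c := by
    intro x c hx
    rw [Real.sqrt_div (sq_nonneg x), Real.sqrt_sq hx]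
  have hQ0 : 0 < Q := lt_trans (by positivity) hQ
  -- rewrite (1 - s)^2 as (s - 1)^2 everywhere is done via these identities
  have hA : (1 - s) ^ 2 / (1 - α) + Q = (s - α) ^ 2 / (α * (1 - α)) := by
    field_simp
    linear_combination (-(1 - α)) * hsq
  have hB : (1 + s) ^ 2 / (1 - α) + Q = (s + α) ^ 2 / (α * (1 - α)) := by
    field_simp
    linear_combination (-(1 - α)) * hsq
  have hab : (1 - s) ^ 2 / (1 - α) * ((1 + s) ^ 2 / (1 - α))
      = ((s - 1) * (s + 1) / (1 - α)) ^ 2 := by ring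
  have hABprod : (s - α) ^ 2 / (α * (1 - α)) * ((s + α) ^ 2 / (α * (1 - α)))
      = ((s - α) * (s + α) / (α * (1 - α))) ^ 2 := by ring
  have hd : Real.sqrt (α * (1 - α)) = u * t := Real.sqrt_mul hα0.le _
  have sqrt_a : Real.sqrt ((1 - s) ^ 2 / (1 - α)) = (s - 1) / t := by
    rw [show (1 - s) ^ 2 = (s - 1) ^ 2 by ring, key _ _ (by linarith)]
  have sqrt_b : Real.sqrt ((1 + s) ^ 2 / (1 - α)) = (s + 1) / t := by
    rw [show (1 + s) ^ 2 = (s + 1) ^ 2 by ring, key _ _ (by linarith)]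
  have sqrt_aQ : Real.sqrt ((1 - s) ^ 2 / (1 - α) + Q) = (s - α) / (u * t) := by
    rw [hA, key _ _ (by linarith), hd]
  have sqrt_bQ : Real.sqrt ((1 + s) ^ 2 / (1 - α) + Q) = (s + α) / (u * t) := by
    rw [hB, key _ _ (by linarith), hd]
  have sqrt_ab : Real.sqrt ((1 - s) ^ 2 / (1 - α) * ((1 + s) ^ 2 / (1 - α)))
      = (s - 1) * (s + 1) / (1 - α) := by
    rw [hab, Real.sqrt_sq (div_nonneg (mul_nonneg (by linarith) (by linarith)) h1α.le)]
  have sqrt_abQ : Real.sqrt (((1 - s) ^ 2 / (1 - α) + Q) * ((1 + s) ^ 2 / (1 - α) + Q))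
      = (s - α) * (s + α) / (α * (1 - α)) := by
    rw [hA, hB, hABprod, Real.sqrt_sq
      (div_nonneg (mul_nonneg (by linarith) (by linarith)) (by positivity))]
  clear_value s t u
  refine ⟨?_, by ring, ?_, ?_, ?_⟩
  · apply div_pos _ h1α
    rw [show (1 - s) ^ 2 = (s - 1) ^ 2 by ring]
    exact pow_pos (by linarith) 2
  · rw [div_lt_div_iff₀ h1α h1α]
    nlinarith [mul_pos (lt_trans one_pos hs1) h1α]
  · rw [sqrt_a, sqrt_b, sqrt_aQ, sqrt_bQ]
    rw [show (s + α) / (u * t) - (s - α) / (u * t) = 2 * α / (u * t) by ring,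
        show (s + 1) / t - (s - 1) / t = 2 / t by ring]
    field_simp
    linear_combination (-1) * hu2
  · rw [sqrt_ab, sqrt_abQ]
    field_simp
    linear_combination (1 - α) * hsq
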